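/- Let g : E → E be continuous and suppose there is γ > 0 such that ⟪x − y, g x − g y⟫_P ≤ −γ · ‖x − y‖_P² for all x, y ∈ E. Then there exists a unique x* ∈ E with g x* = 0. -/

import Mathlib

/-- Weighted inner product `⟪u, P.mulVec v⟫` on Euclidean space. -/
noncomputable def wip {n : ℕ} (P : Matrix (Fin n) (Fin n) ℝ)
    (u v : EuclideanSpace ℝ (Fin n)) : ℝ :=
  ∑ i, u i * P.mulVec (fun j => v j) i

/-- Weighted norm `‖u‖_P = √⟪u, u⟫_P`. -/
noncomputable def wnorm {n : ℕ} (P : Matrix (Fin n) (Fin n) ℝ)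
    (u : EuclideanSpace ℝ (Fin n)) : ℝ :=
  Real.sqrt (wip P u u)


open MeasureTheory Filter Metric Set
open scoped RealInnerProductSpace Topology Convolution

variable {n : ℕ}

local notation "E" => EuclideanSpace ℝ (Fin n)

lemma deriv_bound {f : E → E} (hf : ContDiff ℝ 1 f) {c : ℝ}
    (hm : ∀ x y : E, c * ‖x - y‖ ^ 2 ≤ ⟪x - y, f x - f y⟫)
    (x v : E) : c * ‖v‖ ^ 2 ≤ ⟪v, fderiv ℝ f x v⟫ := by
  set φ : ℝ → ℝ := fun t => ⟪v, f (x + t • v)⟫ with hφdef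
  have hline : HasDerivAt (fun t : ℝ => x + t • v) v 0 := by
    simpa using ((hasDerivAt_id (0:ℝ)).smul_const v).const_add x
  have hfd : HasFDerivAt f (fderiv ℝ f x) (x + (0:ℝ) • v) := by
    simpa using (hf.differentiable one_ne_zero x).hasFDerivAt
  have hcomp : HasDerivAt (fun t : ℝ => f (x + t • v)) (fderiv ℝ f x v) 0 :=
    hfd.comp_hasDerivAt 0 hline
  have hD : HasDerivAt φ ⟪v, fderiv ℝ f x v⟫ 0 := by
    exact ((innerSL ℝ v).hasFDerivAt.comp_hasDerivAt 0 hcomp)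
  have hslope : Tendsto (slope φ 0) (𝓝[>] 0) (𝓝 ⟪v, fderiv ℝ f x v⟫) :=
    (hasDerivAt_iff_tendsto_slope.mp hD).mono_left
      (nhdsWithin_mono _ fun t ht => ne_of_gt ht)
  refine ge_of_tendsto hslope ?_
  filter_upwards [self_mem_nhdsWithin] with t (ht : 0 < t)
  have key := hm (x + t • v) x
  have h1 : (x + t • v) - x = t • v := by abel
  rw [h1, real_inner_smul_left, norm_smul] at key
  simp only [Real.norm_eq_abs, abs_of_pos ht] at key
  have hphit : φ t - φ 0 = ⟪v, f (x + t • v) - f x⟫ := by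
    simp [hφdef, inner_sub_right]
  rw [slope_def_field, sub_zero, hphit, le_div_iff₀ ht]
  nlinarith [key, ht]


lemma antilip {f : E → E} {c : ℝ} (hc : 0 < c)
    (hm : ∀ x y : E, c * ‖x - y‖ ^ 2 ≤ ⟪x - y, f x - f y⟫) :
    ∀ x y : E, c * ‖x - y‖ ≤ ‖f x - f y‖ := by
  intro x y
  rcases eq_or_ne x y with rfl | hxy
  · simp
  · have h1 := hm x y
    have h2 := real_inner_le_norm (x - y) (f x - f y)
    have h3 : 0 < ‖x - y‖ := by
      rw [norm_pos_iff]; exact sub_ne_zero_of_ne hxy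
    nlinarith [norm_nonneg (f x - f y)]

lemma surj_of_contDiff {f : E → E} (hf : ContDiff ℝ 1 f) {c : ℝ} (hc : 0 < c)
    (hm : ∀ x y : E, c * ‖x - y‖ ^ 2 ≤ ⟪x - y, f x - f y⟫) :
    Function.Surjective f := by
  have hal := antilip hc hm
  -- range is open
  have hopen : IsOpen (Set.range f) := by
    rw [isOpen_iff_mem_nhds]
    rintro w ⟨x, rfl⟩
    set L := fderiv ℝ f x with hL
    have hinj : Function.Injective (L : E →ₗ[ℝ] E) := by
      intro v w hvw
      have h0 : L (v - w) = 0 := by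
        have : L v = L w := hvw
        simp [map_sub, this]
      have := deriv_bound hf hm x (v - w)
      rw [h0] at this
      simp only [inner_zero_right] at this
      have : ‖v - w‖ ^ 2 ≤ 0 := by nlinarith
      have : v - w = 0 := by
        rw [← norm_eq_zero]
        nlinarith [norm_nonneg (v - w), sq_nonneg (‖v - w‖)]
      exact sub_eq_zero.mp this
    have hbij : Function.Bijective (L : E →ₗ[ℝ] E) :=
      ⟨hinj, LinearMap.injective_iff_surjective.mp hinj⟩
    let e : E ≃ₗ[ℝ] E := LinearEquiv.ofBijective (L : E →ₗ[ℝ] E) hbij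
    let e' : E ≃L[ℝ] E := e.toContinuousLinearEquiv
    have he' : (e' : E →L[ℝ] E) = L := by
      ext v
      have h := congrFun e.coe_toContinuousLinearEquiv' v
      have h2 : e v = L v := rfl
      simp only [e'] at *
      rw [ContinuousLinearEquiv.coe_coe]
      rw [h, h2]
    have hstrict : HasStrictFDerivAt f (e' : E →L[ℝ] E) x := by
      rw [he']
      exact hf.contDiffAt.hasStrictFDerivAt one_ne_zero
    have hmap := hstrict.map_nhds_eq_of_equiv
    rw [← hmap, mem_map]
    have : f ⁻¹' Set.range f = Set.univ := by
      ext z; simp [Set.mem_range]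
    rw [this]
    exact univ_mem
  -- range is closed
  have hclosed : IsClosed (Set.range f) := by
    have hproper : IsProperMap f := by
      rw [isProperMap_iff_isCompact_preimage]
      refine ⟨hf.continuous, fun {K} hK => ?_⟩
      obtain ⟨R, hR⟩ := hK.isBounded.subset_closedBall (f 0)
      have hsub : f ⁻¹' K ⊆ closedBall 0 (c⁻¹ * R) := by
        intro x hx
        have h1 : c * ‖x - 0‖ ≤ ‖f x - f 0‖ := hal x 0
        have h2 : dist (f x) (f 0) ≤ R := by
          have := hR hx
          simpa [dist_comm] using mem_closedBall.mp this
        rw [dist_eq_norm] at h2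
        rw [mem_closedBall, dist_zero_right]
        have : c * ‖x - 0‖ ≤ R := h1.trans h2
        rw [sub_zero] at this
        calc ‖x‖ = c⁻¹ * (c * ‖x‖) := by field_simp
        _ ≤ c⁻¹ * R := by
          apply mul_le_mul_of_nonneg_left this (le_of_lt (inv_pos.mpr hc))
      exact (isCompact_closedBall 0 (c⁻¹ * R)).of_isClosed_subset
        (hK.isClosed.preimage hf.continuous) hsub
    exact hproper.isClosedMap.isClosed_range
  have : Set.range f = Set.univ :=
    IsClopen.eq_univ ⟨hclosed, hopen⟩ ⟨f 0, Set.mem_range_self 0⟩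
  intro w
  have : w ∈ Set.range f := this ▸ Set.mem_univ w
  exact this

lemma conv_integrable (φ : ContDiffBump (0 : E)) {g : E → E} (hg : Continuous g) (x : E) :
    Integrable (fun t => φ.normed volume t • g (x - t)) volume := by
  apply Continuous.integrable_of_hasCompactSupport
  · exact (φ.continuous_normed).smul (hg.comp (continuous_const.sub continuous_id))
  · exact φ.hasCompactSupport_normed.smul_right

lemma mono_conv (φ : ContDiffBump (0 : E)) {g : E → E} (hg : Continuous g) {c : ℝ}
    (hm : ∀ x y : E, c * ‖x - y‖ ^ 2 ≤ ⟪x - y, g x - g y⟫) :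
    ∀ x y : E, c * ‖x - y‖ ^ 2 ≤
      ⟪x - y, (φ.normed volume ⋆[ContinuousLinearMap.lsmul ℝ ℝ, volume] g) x
        - (φ.normed volume ⋆[ContinuousLinearMap.lsmul ℝ ℝ, volume] g) y⟫ := by
  intro x y
  have Ix := conv_integrable φ hg x
  have Iy := conv_integrable φ hg y
  have hsub : (φ.normed volume ⋆[ContinuousLinearMap.lsmul ℝ ℝ, volume] g) x
      - (φ.normed volume ⋆[ContinuousLinearMap.lsmul ℝ ℝ, volume] g) y
      = ∫ t, φ.normed volume t • (g (x - t) - g (y - t)) := by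
    rw [convolution_def, convolution_def]
    simp only [ContinuousLinearMap.lsmul_apply]
    rw [← integral_sub Ix Iy]
    congr 1
    ext t
    simp [smul_sub, mul_sub]
  rw [hsub, ← integral_inner (Ix.sub Iy |>.congr ?hcong)]
  case hcong =>
    filter_upwards with t
    simp [smul_sub]
  have hpt : ∀ t : E, φ.normed volume t * (c * ‖x - y‖ ^ 2)
      ≤ ⟪x - y, φ.normed volume t • (g (x - t) - g (y - t))⟫ := by
    intro t
    rw [real_inner_smul_right]
    apply mul_le_mul_of_nonneg_left _ (φ.nonneg_normed t)
    have := hm (x - t) (y - t)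
    have hxy : (x - t) - (y - t) = x - y := by abel
    rwa [hxy] at this
  have hIl : Integrable (fun t => φ.normed volume t * (c * ‖x - y‖ ^ 2)) volume :=
    (φ.integrable_normed).mul_const _
  have hIr : Integrable (fun t => ⟪x - y, φ.normed volume t • (g (x - t) - g (y - t))⟫) volume := by
    have : Integrable (fun t => φ.normed volume t • (g (x - t) - g (y - t))) volume :=
      (Ix.sub Iy).congr (by filter_upwards with t; simp [smul_sub])
    exact this.const_inner _
  calc c * ‖x - y‖ ^ 2 = ∫ t, φ.normed volume t * (c * ‖x - y‖ ^ 2) := by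
        rw [MeasureTheory.integral_mul_const, φ.integral_normed, one_mul]
    _ ≤ ∫ t, ⟪x - y, φ.normed volume t • (g (x - t) - g (y - t))⟫ :=
        integral_mono hIl hIr hpt






lemma exists_zero_of_mono {f : E → E} (hf : Continuous f) {c : ℝ} (hc : 0 < c)
    (hm : ∀ x y : E, c * ‖x - y‖ ^ 2 ≤ ⟪x - y, f x - f y⟫) :
    ∃ x : E, f x = 0 := by
  -- bump functions with radii tending to zero
  have hradii : ∀ k : ℕ, (0:ℝ) < 1 / (k + 1) ∧ (1:ℝ) / (k+1) < 2 / (k+1) := by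
    intro k
    constructor
    · positivity
    · have hk : (0:ℝ) < (k:ℝ)+1 := by positivity
      rw [div_lt_div_iff₀ hk hk]; nlinarith
  let φ : ℕ → ContDiffBump (0 : E) := fun k =>
    ⟨1 / (k + 1), 2 / (k + 1), (hradii k).1, (hradii k).2⟩
  have hφr : Tendsto (fun k => (φ k).rOut) atTop (𝓝 0) := by
    simpa [φ] using tendsto_const_nhds.div_atTop
      (tendsto_atTop_add_const_right atTop (1:ℝ) tendsto_natCast_atTop_atTop)
  let F : ℕ → E → E := fun k =>
    (φ k).normed volume ⋆[ContinuousLinearMap.lsmul ℝ ℝ, volume] f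
  have hFc : ∀ k, ContDiff ℝ 1 (F k) := fun k =>
    HasCompactSupport.contDiff_convolution_left _ (φ k).hasCompactSupport_normed
      ((φ k).contDiff_normed) (hf.locallyIntegrable)
  have hFm : ∀ k, ∀ x y : E, c * ‖x - y‖ ^ 2 ≤ ⟪x - y, F k x - F k y⟫ := fun k =>
    mono_conv (φ k) hf hm
  -- zeros of the approximations
  have hFz : ∀ k, ∃ x : E, F k x = 0 := fun k => surj_of_contDiff (hFc k) hc (hFm k) 0
  choose x hx using hFz
  -- F k 0 converges to f 0, hence is bounded
  have hF0 : Tendsto (fun k => F k 0) atTop (𝓝 (f 0)) :=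
    ContDiffBump.convolution_tendsto_right_of_continuous hφr hf 0
  obtain ⟨C, hC⟩ : ∃ C, ∀ k, ‖F k 0‖ ≤ C := by
    obtain ⟨C, hC⟩ := hF0.norm.bddAbove_range
    exact ⟨C, fun k => hC ⟨k, rfl⟩⟩
  have hC0 : 0 ≤ C := (norm_nonneg _).trans (hC 0)
  -- the zeros are bounded
  have hxb : ∀ k, ‖x k‖ ≤ c⁻¹ * C := by
    intro k
    have h1 := hFm k (x k) 0
    rw [hx k] at h1
    simp only [sub_zero, zero_sub, inner_neg_right] at h1
    have h2 : |⟪x k, F k 0⟫| ≤ ‖x k‖ * ‖F k 0‖ := abs_real_inner_le_norm _ _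
    have h2' : -⟪x k, F k 0⟫ ≤ |⟪x k, F k 0⟫| := neg_le_abs _
    have h3 : c * ‖x k‖ ^ 2 ≤ ‖x k‖ * C := by
      have := mul_le_mul_of_nonneg_left (hC k) (norm_nonneg (x k))
      linarith
    rcases eq_or_lt_of_le (norm_nonneg (x k)) with h4 | h4
    · rw [← h4]; exact mul_nonneg (by positivity) hC0
    · calc ‖x k‖ = c⁻¹ * (c * ‖x k‖) := by field_simp
        _ ≤ c⁻¹ * C := by
          apply mul_le_mul_of_nonneg_left _ (le_of_lt (inv_pos.mpr hc))
          nlinarith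
  -- extract a convergent subsequence
  have hcomp : IsCompact (closedBall (0 : E) (c⁻¹ * C)) := isCompact_closedBall _ _
  have hmem : ∀ k, x k ∈ closedBall (0 : E) (c⁻¹ * C) := by
    intro k; rw [mem_closedBall, dist_zero_right]; exact hxb k
  obtain ⟨a, -, ψ, hψ, hlim⟩ := hcomp.tendsto_subseq hmem
  refine ⟨a, ?_⟩
  -- the convolutions evaluated at x (ψ j) tend to f a
  have hconv : Tendsto (fun j => F (ψ j) (x (ψ j))) atTop (𝓝 (f a)) := by
    apply ContDiffBump.convolution_tendsto_right (φ := fun j => φ (ψ j)) (g := fun _ => f)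
    · exact hφr.comp hψ.tendsto_atTop
    · exact Eventually.of_forall fun _ => hf.aestronglyMeasurable
    · exact (hf.tendsto a).comp tendsto_snd
    · exact hlim
  have : Tendsto (fun _ : ℕ => (0 : E)) atTop (𝓝 (f a)) := by
    simpa [hx] using hconv
  exact (tendsto_nhds_unique tendsto_const_nhds this).symm







noncomputable def wip' {n : ℕ} (P : Matrix (Fin n) (Fin n) ℝ)
    (u v : EuclideanSpace ℝ (Fin n)) : ℝ :=
  ∑ i, u i * P.mulVec (fun j => v j) i

lemma wip'_expand (P : Matrix (Fin n) (Fin n) ℝ) (u v : E) :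
    wip' P u v = ∑ i, ∑ j, u i * (P i j * v j) := by
  unfold wip' Matrix.mulVec dotProduct
  congr 1
  ext i
  rw [Finset.mul_sum]

lemma wip'_self_eq_dot (P : Matrix (Fin n) (Fin n) ℝ) (u : E) :
    wip' P u u = dotProduct (star (fun i => u i)) (P.mulVec (fun j => u j)) := by
  unfold wip' dotProduct
  simp

lemma wip'_nonneg {P : Matrix (Fin n) (Fin n) ℝ} (hP : P.PosDef) (u : E) :
    0 ≤ wip' P u u := by
  rw [wip'_self_eq_dot]
  exact hP.posSemidef.dotProduct_mulVec_nonneg _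

lemma wip'_pos {P : Matrix (Fin n) (Fin n) ℝ} (hP : P.PosDef) {u : E} (hu : u ≠ 0) :
    0 < wip' P u u := by
  rw [wip'_self_eq_dot]
  apply hP.dotProduct_mulVec_pos
  intro h
  apply hu
  ext i
  exact congrFun h i

lemma wip'_smul (P : Matrix (Fin n) (Fin n) ℝ) (r : ℝ) (u : E) :
    wip' P (r • u) (r • u) = r ^ 2 * wip' P u u := by
  rw [wip'_expand, wip'_expand, Finset.mul_sum]
  apply Finset.sum_congr rfl
  intro i _
  rw [Finset.mul_sum]
  apply Finset.sum_congr rfl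
  intro j _
  have h1 : (r • u) i = r * u i := rfl
  have h2 : (r • u) j = r * u j := rfl
  rw [h1, h2]; ring

lemma wip'_continuous (P : Matrix (Fin n) (Fin n) ℝ) :
    Continuous fun u : E => wip' P u u := by
  simp only [wip'_expand]
  apply continuous_finset_sum
  intro i _
  apply continuous_finset_sum
  intro j _
  exact (EuclideanSpace.proj i).continuous.mul (continuous_const.mul (EuclideanSpace.proj j).continuous)

lemma posdef_lower_bound {P : Matrix (Fin n) (Fin n) ℝ} (hP : P.PosDef) (hn : 0 < n) :
    ∃ m : ℝ, 0 < m ∧ ∀ u : E, m * ‖u‖ ^ 2 ≤ wip' P u u := by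
  have hsne : (sphere (0 : E) 1).Nonempty := by
    refine ⟨EuclideanSpace.single ⟨0, hn⟩ (1 : ℝ), ?_⟩
    simp [EuclideanSpace.norm_single]
  obtain ⟨a, ha, hmin⟩ := (isCompact_sphere (0 : E) 1).exists_isMinOn hsne
    ((wip'_continuous P).continuousOn)
  have hanorm : ‖a‖ = 1 := by simpa [dist_zero_right] using ha
  have hane : a ≠ 0 := by
    intro h; rw [h, norm_zero] at hanorm; norm_num at hanorm
  refine ⟨wip' P a a, wip'_pos hP hane, fun u => ?_⟩
  rcases eq_or_ne u 0 with rfl | hu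
  · simpa using wip'_nonneg hP 0
  · have hnu : (0:ℝ) < ‖u‖ := norm_pos_iff.mpr hu
    set w : E := ‖u‖⁻¹ • u with hw
    have hwnorm : ‖w‖ = 1 := by
      rw [hw, norm_smul, norm_inv, norm_norm, inv_mul_cancel₀ (ne_of_gt hnu)]
    have hwmem : w ∈ sphere (0 : E) 1 := by simp [dist_zero_right, hwnorm]
    have hmw := hmin hwmem
    have huw : u = ‖u‖ • w := by
      rw [hw, smul_smul, mul_inv_cancel₀ (ne_of_gt hnu), one_smul]
    calc wip' P a a * ‖u‖ ^ 2 ≤ wip' P w w * ‖u‖ ^ 2 := by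
          apply mul_le_mul_of_nonneg_right hmw (by positivity)
      _ = wip' P u u := by
          conv_rhs => rw [huw, wip'_smul]
          ring
theorem stmt_2 {n : ℕ} (P : Matrix (Fin n) (Fin n) ℝ)
    (hPsymm : P.IsSymm) (hPpos : P.PosDef)
    (g : EuclideanSpace ℝ (Fin n) → EuclideanSpace ℝ (Fin n))
    (hg : Continuous g) (γ : ℝ) (hγ : 0 < γ)
    (hOSL : ∀ x y : EuclideanSpace ℝ (Fin n),
      wip P (x - y) (g x - g y) ≤ -γ * (wnorm P (x - y)) ^ 2) :
    ∃! xs : EuclideanSpace ℝ (Fin n), g xs = 0 := by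
  have hwipeq : ∀ (u v : EuclideanSpace ℝ (Fin n)), wip P u v = wip' P u v := fun u v => rfl
  rcases Nat.eq_zero_or_pos n with hn | hn
  · subst hn
    have hall : ∀ x : EuclideanSpace ℝ (Fin 0), x = 0 := fun x => by ext i; exact Fin.elim0 i
    exact ⟨0, hall (g 0), fun y _ => hall y⟩
  -- n ≥ 1
  obtain ⟨m, hm, hml⟩ := posdef_lower_bound hPpos hn
  have hwnormsq : ∀ u : EuclideanSpace ℝ (Fin n), (wnorm P u) ^ 2 = wip P u u := by
    intro u
    rw [wnorm, Real.sq_sqrt]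
    rw [hwipeq]
    exact wip'_nonneg hPpos u
  -- the transformed map
  set f : EuclideanSpace ℝ (Fin n) → EuclideanSpace ℝ (Fin n) := fun x =>
    -((EuclideanSpace.equiv (Fin n) ℝ).symm
        (P.mulVecLin ((EuclideanSpace.equiv (Fin n) ℝ) (g x)))) with hf
  have hfc : ∀ x i, f x i = -(P.mulVec (fun j => g x j) i) := fun x i => rfl
  have hfcont : Continuous f := by
    apply Continuous.neg
    exact (EuclideanSpace.equiv (Fin n) ℝ).symm.continuous.comp
      ((P.mulVecLin.continuous_of_finiteDimensional).comp
        ((EuclideanSpace.equiv (Fin n) ℝ).continuous.comp hg))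
  have hinner : ∀ a b : EuclideanSpace ℝ (Fin n), ⟪a, b⟫ = ∑ i, a i * b i := by
    intro a b
    rw [PiLp.inner_apply]
    simp [mul_comm]
  have hpos : 0 < γ * m := mul_pos hγ hm
  have hmono : ∀ x y : EuclideanSpace ℝ (Fin n),
      (γ * m) * ‖x - y‖ ^ 2 ≤ ⟪x - y, f x - f y⟫ := by
    intro x y
    have h1 : ⟪x - y, f x - f y⟫ = -(wip P (x - y) (g x - g y)) := by
      rw [hinner, wip, ← Finset.sum_neg_distrib]
      apply Finset.sum_congr rfl
      intro i _
      have h2 : (f x - f y) i = f x i - f y i := rfl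
      rw [h2, hfc, hfc]
      have hmv : P.mulVec (fun j => (g x - g y) j) i
          = P.mulVec (fun j => g x j) i - P.mulVec (fun j => g y j) i := by
        have h3 : (fun j => (g x - g y) j)
            = (fun j => g x j) - (fun j => g y j) := rfl
        rw [h3, Matrix.mulVec_sub]
        rfl
      rw [hmv]; ring
    rw [h1]
    have h4 := hOSL x y
    have h5 : γ * (wnorm P (x - y)) ^ 2 ≤ -(wip P (x - y) (g x - g y)) := by linarith
    have h6 : (γ * m) * ‖x - y‖ ^ 2 ≤ γ * (wnorm P (x - y)) ^ 2 := by
      rw [hwnormsq, hwipeq]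
      have := hml (x - y)
      calc γ * m * ‖x - y‖ ^ 2 = γ * (m * ‖x - y‖ ^ 2) := by ring
        _ ≤ γ * wip' P (x - y) (x - y) := by
            exact mul_le_mul_of_nonneg_left this (le_of_lt hγ)
    linarith
  obtain ⟨xs, hxs⟩ := exists_zero_of_mono hfcont hpos hmono
  have hgxs : g xs = 0 := by
    by_contra hne
    have hP0 : ∀ i, P.mulVec (fun j => g xs j) i = 0 := by
      intro i
      have h0 : f xs i = (0 : EuclideanSpace ℝ (Fin n)) i := by rw [hxs]
      rw [hfc] at h0
      have h0' : (0 : EuclideanSpace ℝ (Fin n)) i = 0 := rfl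
      rw [h0'] at h0
      linarith [h0]
    have hqz : wip' P (g xs) (g xs) = 0 := by
      rw [← hwipeq, wip]
      apply Finset.sum_eq_zero
      intro i _
      rw [hP0 i, mul_zero]
    have := wip'_pos hPpos hne
    rw [hqz] at this
    exact lt_irrefl 0 this
  refine ⟨xs, hgxs, fun y hy => ?_⟩
  have h7 := hOSL y xs
  rw [hy, hgxs, sub_zero] at h7
  have h8 : wip P (y - xs) 0 = 0 := by
    rw [wip]
    apply Finset.sum_eq_zero
    intro i _
    have h9 : (fun j => (0 : EuclideanSpace ℝ (Fin n)) j) = (0 : Fin n → ℝ) := rfl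
    rw [h9, Matrix.mulVec_zero]
    simp
  rw [h8] at h7
  have h10 : (wnorm P (y - xs)) ^ 2 ≤ 0 := by nlinarith
  have h11 := hml (y - xs)
  rw [hwnormsq, hwipeq] at h10
  have h12 : ‖y - xs‖ ^ 2 ≤ 0 := by nlinarith
  have h13 : y - xs = 0 := by
    rw [← norm_eq_zero]
    nlinarith [norm_nonneg (y - xs), sq_nonneg ‖y - xs‖]
  exact sub_eq_zero.mp h13
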